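/- Let G be a finite simple graph without isolated vertices. The map sending each vertex 𝔸 = (A₀ ⊂ A₁ ⊂ ⋯ ⊂ A_k) of sd L(G) (a chain of nonempty closed sets) to A₀ ⊎ CN(A_k) is a well-defined simplicial ℤ₂-map sd L(G) → B₁(G). -/

import Mathlib

open Finset

attribute [local instance] Classical.propDecidable

noncomputable section

variable {V : Type*}

/-- The set `CN(A)` of common neighbors of `A` in `G` (so `CN(∅) = V`). -/
def CN [Fintype V] (G : SimpleGraph V) (A : Finset V) : Finset V :=
  Finset.univ.filter fun v => ∀ a ∈ A, G.Adj a v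

/-- The shore of `S ⊆ V × {1,2}` lying over `b` (with `false` for the first copy of `V`
and `true` for the second). -/
def shore (S : Finset (V × Bool)) (b : Bool) : Finset V :=
  (S.filter fun p => p.2 = b).image Prod.fst

/-- `A' ⊎ A'' := (A' × {1}) ∪ (A'' × {2})`, with `false` for `1` and `true` for `2`. -/
def joinPair (A' A'' : Finset V) : Finset (V × Bool) :=
  A'.image (fun v => (v, false)) ∪ A''.image (fun v => (v, true))

/-- The ℤ₂-action on subsets of `V × {1,2}`: interchange the two copies of `V`,
i.e. `A' ⊎ A'' ↦ A'' ⊎ A'`. -/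
def swapFinset (S : Finset (V × Bool)) : Finset (V × Bool) :=
  S.image fun p => (p.1, !p.2)

/-- `G[A', A'']` is complete: every vertex of `A'` is adjacent to every vertex of `A''`. -/
def IsCompleteBip (G : SimpleGraph V) (A' A'' : Finset V) : Prop :=
  ∀ a ∈ A', ∀ b ∈ A'', G.Adj a b

/-- Simplices of the box complex `B(G)`: sets `A' ⊎ A''` with `A'`, `A''` disjoint,
`G[A', A'']` complete and `CN(A') ≠ ∅ ≠ CN(A'')`. -/
def BoxSimplex [Fintype V] (G : SimpleGraph V) (S : Finset (V × Bool)) : Prop :=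
  Disjoint (shore S false) (shore S true) ∧
  IsCompleteBip G (shore S false) (shore S true) ∧
  (CN G (shore S false)).Nonempty ∧ (CN G (shore S true)).Nonempty

/-- Simplices of the box complex `B₀(G)`: sets `A' ⊎ A''` with `A'`, `A''` disjoint and
`G[A', A'']` complete. -/
def Box0Simplex (G : SimpleGraph V) (S : Finset (V × Bool)) : Prop :=
  Disjoint (shore S false) (shore S true) ∧
  IsCompleteBip G (shore S false) (shore S true)

/-- Vertices of `B₁(G)`: sets `A' ⊎ A''` with `A'`, `A''` nonempty, disjoint and
`G[A', A'']` complete. -/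
def B1Vertex (G : SimpleGraph V) (S : Finset (V × Bool)) : Prop :=
  (shore S false).Nonempty ∧ (shore S true).Nonempty ∧
  Disjoint (shore S false) (shore S true) ∧
  IsCompleteBip G (shore S false) (shore S true)

/-- Simplices of the order complex `B₁(G)`: chains of vertices of `B₁(G)` under inclusion. -/
def B1Simplex (G : SimpleGraph V) (C : Finset (Finset (V × Bool))) : Prop :=
  (∀ T ∈ C, B1Vertex G T) ∧ IsChain (· ⊆ ·) (C : Set (Finset (V × Bool)))

/-- Simplices of the barycentric subdivision `sd K` of the complex `K` whose simplices are
given by the predicate `P`: chains of nonempty simplices of `K` under inclusion. -/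
def sdSimplex {γ : Type*} (P : Finset γ → Prop) (C : Finset (Finset γ)) : Prop :=
  (∀ S ∈ C, P S ∧ S.Nonempty) ∧ IsChain (· ⊆ ·) (C : Set (Finset γ))

/-- Vertices of the Lovász complex `L(G)`: nonempty proper closed subsets of `V`. -/
def LVertex [Fintype V] (G : SimpleGraph V) (A : Finset V) : Prop :=
  A.Nonempty ∧ A ≠ Finset.univ ∧ CN G (CN G A) = A

/-- Simplices of the Lovász complex `L(G)`: chains of closed sets under inclusion. -/
def LSimplex [Fintype V] (G : SimpleGraph V) (C : Finset (Finset V)) : Prop :=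
  (∀ A ∈ C, LVertex G A) ∧ IsChain (· ⊆ ·) (C : Set (Finset V))

/-- Vertices of `sd L(G)`: nonempty chains `𝔸 = (A₀ ⊂ ⋯ ⊂ A_k)` of closed sets. -/
def SdLVertex [Fintype V] (G : SimpleGraph V) (𝔸 : Finset (Finset V)) : Prop :=
  𝔸.Nonempty ∧ LSimplex G 𝔸

section Helpers

variable [Fintype V] {G : SimpleGraph V}

lemma mem_CN' {A : Finset V} {v : V} : v ∈ CN G A ↔ ∀ a ∈ A, G.Adj a v := by
  simp [CN]

lemma CN_anti {A B : Finset V} (h : A ⊆ B) : CN G B ⊆ CN G A := fun v hv =>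
  mem_CN'.2 fun a ha => mem_CN'.1 hv a (h ha)

lemma CN_empty : CN G (∅ : Finset V) = Finset.univ := by simp [CN]

lemma shore_joinPair_false (A B : Finset V) : shore (joinPair A B) false = A := by
  ext v; simp [shore, joinPair]

lemma shore_joinPair_true (A B : Finset V) : shore (joinPair A B) true = B := by
  ext v; simp [shore, joinPair]

lemma swap_joinPair (A B : Finset V) : swapFinset (joinPair A B) = joinPair B A := by
  ext ⟨v, b⟩
  cases b <;> simp [swapFinset, joinPair]

lemma joinPair_subset {A A' B B' : Finset V} (h1 : A ⊆ A') (h2 : B ⊆ B') :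
    joinPair A B ⊆ joinPair A' B' := by
  intro p hp
  simp only [joinPair, Finset.mem_union, Finset.mem_image] at hp ⊢
  rcases hp with ⟨v, hv, rfl⟩ | ⟨v, hv, rfl⟩
  · exact Or.inl ⟨v, h1 hv, rfl⟩
  · exact Or.inr ⟨v, h2 hv, rfl⟩

lemma CN_nonempty {A : Finset V} (hA : LVertex G A) : (CN G A).Nonempty := by
  by_contra h
  rw [Finset.not_nonempty_iff_eq_empty] at h
  have h2 := hA.2.2
  rw [h, CN_empty] at h2
  exact hA.2.1 h2.symm

lemma CN_ne_univ {A : Finset V} (hA : A.Nonempty) : CN G A ≠ Finset.univ := by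
  intro h
  obtain ⟨a, ha⟩ := hA
  have : a ∈ CN G A := h ▸ Finset.mem_univ a
  exact G.loopless.irrefl a (mem_CN'.1 this a ha)

lemma LVertex_CN {A : Finset V} (hA : LVertex G A) : LVertex G (CN G A) :=
  ⟨CN_nonempty hA, CN_ne_univ hA.1, by rw [hA.2.2]⟩

lemma B1Vertex_of {A B : Finset V} (hA : LVertex G A) (hB : LVertex G B) (hAB : A ⊆ B) :
    B1Vertex G (joinPair A (CN G B)) := by
  rw [B1Vertex, shore_joinPair_false, shore_joinPair_true]
  refine ⟨hA.1, CN_nonempty hB, ?_, ?_⟩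
  · rw [Finset.disjoint_left]
    intro a ha hcn
    exact G.loopless.irrefl a (mem_CN'.1 hcn a (hAB ha))
  · intro a ha b hb
    exact mem_CN'.1 hb a (hAB ha)

lemma chain_exists_min {α : Type*} {s : Finset (Finset α)} (hne : s.Nonempty)
    (hc : IsChain (· ⊆ ·) (s : Set (Finset α))) :
    ∃! A, A ∈ s ∧ ∀ B ∈ s, A ⊆ B := by
  obtain ⟨m, hm, hmin⟩ := s.exists_minimal hne
  have hmle : ∀ B ∈ s, m ⊆ B := by
    intro B hB
    rcases eq_or_ne B m with rfl | hBm
    · exact Finset.Subset.refl _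
    rcases hc hB hm hBm with h | h
    · exact absurd (Finset.Subset.antisymm h (hmin hB h)) hBm
    · exact h
  exact ⟨m, ⟨hm, hmle⟩, fun A ⟨hA, hAle⟩ =>
    Finset.Subset.antisymm (hAle m hm) (hmle A hA)⟩

lemma chain_exists_max {α : Type*} {s : Finset (Finset α)} (hne : s.Nonempty)
    (hc : IsChain (· ⊆ ·) (s : Set (Finset α))) :
    ∃! A, A ∈ s ∧ ∀ B ∈ s, B ⊆ A := by
  obtain ⟨m, hm, hmax⟩ := s.exists_maximal hne
  have hmle : ∀ B ∈ s, B ⊆ m := by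
    intro B hB
    rcases eq_or_ne B m with rfl | hBm
    · exact Finset.Subset.refl _
    rcases hc hB hm hBm with h | h
    · exact h
    · exact absurd (Finset.Subset.antisymm (hmax hB h) h) hBm
  exact ⟨m, ⟨hm, hmle⟩, fun A ⟨hA, hAle⟩ =>
    Finset.Subset.antisymm (hmle A hA) (hAle m hm)⟩

end Helpers

/-- The map sending a vertex `𝔸 = (A₀ ⊂ ⋯ ⊂ A_k)` of `sd L(G)` to `A₀ ⊎ CN(A_k)` is a
well-defined simplicial ℤ₂-map `sd L(G) → B₁(G)` (stated for arbitrary choices `mn 𝔸`,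
`mx 𝔸` of the least and greatest element of each chain `𝔸`, which exist uniquely). -/
theorem sd_Lovasz_to_B1 [Fintype V] (G : SimpleGraph V) (hiso : ∀ v : V, ∃ u, G.Adj v u) :
    (∀ 𝔸, SdLVertex G 𝔸 →
      (∃! A, A ∈ 𝔸 ∧ ∀ B ∈ 𝔸, A ⊆ B) ∧ (∃! A, A ∈ 𝔸 ∧ ∀ B ∈ 𝔸, B ⊆ A)) ∧
    (∀ mn mx : Finset (Finset V) → Finset V,
      (∀ 𝔸, SdLVertex G 𝔸 → mn 𝔸 ∈ 𝔸 ∧ ∀ B ∈ 𝔸, mn 𝔸 ⊆ B) →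
      (∀ 𝔸, SdLVertex G 𝔸 → mx 𝔸 ∈ 𝔸 ∧ ∀ B ∈ 𝔸, B ⊆ mx 𝔸) →
      (∀ 𝔸, SdLVertex G 𝔸 → B1Vertex G (joinPair (mn 𝔸) (CN G (mx 𝔸)))) ∧
      (∀ 𝒞 : Finset (Finset (Finset V)), sdSimplex (LSimplex G) 𝒞 →
        B1Simplex G (𝒞.image fun 𝔸 => joinPair (mn 𝔸) (CN G (mx 𝔸)))) ∧
      (∀ 𝔸, SdLVertex G 𝔸 →
        joinPair (mn (𝔸.image (CN G))) (CN G (mx (𝔸.image (CN G)))) =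
          swapFinset (joinPair (mn 𝔸) (CN G (mx 𝔸))))) := by
  constructor
  · rintro 𝔸 ⟨hne, _, hc⟩
    exact ⟨chain_exists_min hne hc, chain_exists_max hne hc⟩
  · intro mn mx hmn hmx
    have hvert : ∀ 𝔸, SdLVertex G 𝔸 → B1Vertex G (joinPair (mn 𝔸) (CN G (mx 𝔸))) := by
      intro 𝔸 h
      obtain ⟨hmn1, hmn2⟩ := hmn 𝔸 h
      obtain ⟨hmx1, _⟩ := hmx 𝔸 h
      exact B1Vertex_of (h.2.1 _ hmn1) (h.2.1 _ hmx1) (hmn2 _ hmx1)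
    refine ⟨hvert, ?_, ?_⟩
    · rintro 𝒞 ⟨hall, hc⟩
      have hsd : ∀ 𝔸 ∈ 𝒞, SdLVertex G 𝔸 := fun 𝔸 h𝔸 => ⟨(hall 𝔸 h𝔸).2, (hall 𝔸 h𝔸).1⟩
      constructor
      · intro T hT
        obtain ⟨𝔸, h𝔸, rfl⟩ := Finset.mem_image.1 hT
        exact hvert 𝔸 (hsd 𝔸 h𝔸)
      · rintro T hT T' hT' hne
        simp only [Finset.coe_image, Set.mem_image, Finset.mem_coe] at hT hT'
        obtain ⟨𝔸, h𝔸, rfl⟩ := hT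
        obtain ⟨𝔹, h𝔹, rfl⟩ := hT'
        have hAB : 𝔸 ≠ 𝔹 := by rintro rfl; exact hne rfl
        have key : ∀ 𝔸 ∈ 𝒞, ∀ 𝔹 ∈ 𝒞, 𝔸 ⊆ 𝔹 →
            joinPair (mn 𝔹) (CN G (mx 𝔹)) ⊆ joinPair (mn 𝔸) (CN G (mx 𝔸)) := by
          intro 𝔸 h𝔸 𝔹 h𝔹 hsub
          refine joinPair_subset ?_ (CN_anti ?_)
          · exact (hmn 𝔹 (hsd 𝔹 h𝔹)).2 _ (hsub (hmn 𝔸 (hsd 𝔸 h𝔸)).1)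
          · exact (hmx 𝔹 (hsd 𝔹 h𝔹)).2 _ (hsub (hmx 𝔸 (hsd 𝔸 h𝔸)).1)
        rcases hc h𝔸 h𝔹 hAB with h | h
        · exact Or.inr (key 𝔸 h𝔸 𝔹 h𝔹 h)
        · exact Or.inl (key 𝔹 h𝔹 𝔸 h𝔸 h)
    · intro 𝔸 h𝔸
      obtain ⟨hne, hall, hc⟩ := h𝔸
      have h𝔸' : SdLVertex G 𝔸 := ⟨hne, hall, hc⟩
      have h𝔹 : SdLVertex G (𝔸.image (CN G)) := by
        refine ⟨hne.image _, fun B hB => ?_, ?_⟩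
        · obtain ⟨A, hA, rfl⟩ := Finset.mem_image.1 hB
          exact LVertex_CN (hall A hA)
        · rintro B hB B' hB' hBB'
          simp only [Finset.coe_image, Set.mem_image, Finset.mem_coe] at hB hB'
          obtain ⟨A, hA, rfl⟩ := hB
          obtain ⟨A', hA', rfl⟩ := hB'
          have hAA' : A ≠ A' := by rintro rfl; exact hBB' rfl
          rcases hc hA hA' hAA' with h | h
          · exact Or.inr (CN_anti h)
          · exact Or.inl (CN_anti h)
      obtain ⟨hmnB1, hmnB2⟩ := hmn _ h𝔹
      obtain ⟨hmxB1, hmxB2⟩ := hmx _ h𝔹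
      obtain ⟨hmn1, hmn2⟩ := hmn 𝔸 h𝔸'
      obtain ⟨hmx1, hmx2⟩ := hmx 𝔸 h𝔸'
      have e1 : mn (𝔸.image (CN G)) = CN G (mx 𝔸) := by
        refine Finset.Subset.antisymm (hmnB2 _ (Finset.mem_image_of_mem _ hmx1)) ?_
        obtain ⟨B, hB, hBe⟩ := Finset.mem_image.1 hmnB1
        rw [← hBe]
        exact CN_anti (hmx2 B hB)
      have e2 : mx (𝔸.image (CN G)) = CN G (mn 𝔸) := by
        refine Finset.Subset.antisymm ?_ (hmxB2 _ (Finset.mem_image_of_mem _ hmn1))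
        obtain ⟨B, hB, hBe⟩ := Finset.mem_image.1 hmxB1
        rw [← hBe]
        exact CN_anti (hmn2 B hB)
      rw [e1, e2, (hall _ hmn1).2.2, swap_joinPair]
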